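/- arXiv:1507.01993 — 2 statements merged into one kernel-verified Lean document; each statement's English description precedes it below -/
import Mathlib

section
/- Let X be a Banach space and K ⊆ X* nonempty and w*-compact. Then o_w(H^K_ε) = 1 for every ε > 0 if and only if K is norm compact. -/
open NormedSpace

noncomputable def derivIter {α : Type*} (d : Set α → Set α) (K : Set α) : Ordinal → Set α :=
  fun ξ => Ordinal.limitRecOn ξ K (fun _ ih => d ih)
    (fun o _ ih => ⋂ ζ : Set.Iio o, ih ζ.1 ζ.2)

/-- The `D`-derivative of a set of finite sequences. -/
def derivD {Λ : Type*} (D : Set (Set Λ)) (H : Set (List Λ)) : Set (List Λ) :=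
  {t ∈ H | ∀ U ∈ D, ∃ x ∈ U, t ++ [x] ∈ H}

/-- The canonical basis of weak neighborhoods of `0` in `X`. -/
def weakBasis (X : Type*) [NormedAddCommGroup X] [NormedSpace ℝ X] : Set (Set X) :=
  {U | ∃ (F : Finset (StrongDual ℝ X)) (δ : ℝ), 0 < δ ∧ U = {x | ∀ f ∈ F, |f x| < δ}}

/-- The hereditary tree `H^K_ε` of finite sequences in the unit ball of `X` on which
some member of `K` is everywhere at least `ε`. -/
def HKtree {X : Type*} [NormedAddCommGroup X] [NormedSpace ℝ X]
    (K : Set (StrongDual ℝ X)) (ε : ℝ) : Set (List X) :=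
  {t | (∀ x ∈ t, ‖x‖ ≤ 1) ∧ ∃ f ∈ K, ∀ x ∈ t, ε ≤ f x}

/-- `o_D(H)`: least ordinal where the iterated `D`-derivative is empty (`0` if none). -/
noncomputable def ordD {Λ : Type*} (D : Set (Set Λ)) (H : Set (List Λ)) : Ordinal :=
  sInf {ξ | derivIter (derivD D) H ξ = ∅}

lemma derivIter_zero {α : Type*} (d : Set α → Set α) (K : Set α) :
    derivIter d K 0 = K := by
  simp [derivIter, Ordinal.limitRecOn_zero]

lemma derivIter_one {α : Type*} (d : Set α → Set α) (K : Set α) :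
    derivIter d K 1 = d K := by
  show Ordinal.limitRecOn 1 K _ _ = d K
  rw [← Ordinal.succ_zero, Ordinal.limitRecOn_succ, Ordinal.limitRecOn_zero]

lemma ordD_eq_one_iff {Λ : Type*} (D : Set (Set Λ)) (H : Set (List Λ))
    (hH : H.Nonempty) : ordD D H = 1 ↔ derivD D H = ∅ := by
  constructor
  · intro h
    have hS : {ξ | derivIter (derivD D) H ξ = ∅}.Nonempty := by
      by_contra hS
      rw [Set.not_nonempty_iff_eq_empty] at hS
      rw [ordD, hS, Ordinal.sInf_empty] at h
      exact absurd h (by simp)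
    have := csInf_mem hS
    rw [show sInf {ξ | derivIter (derivD D) H ξ = ∅} = 1 from h] at this
    simpa [derivIter_one] using this
  · intro h
    have h1 : (1 : Ordinal) ∈ {ξ | derivIter (derivD D) H ξ = ∅} := by
      simp [derivIter_one, h]
    have hle : ordD D H ≤ 1 := csInf_le' h1
    have hne : ordD D H ≠ 0 := by
      intro h0
      have := csInf_mem ⟨1, h1⟩
      rw [ordD] at h0
      rw [h0] at this
      simp only [Set.mem_setOf_eq, derivIter_zero] at this
      exact hH.ne_empty this
    exact le_antisymm hle (Ordinal.one_le_iff_ne_zero.mpr hne)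

theorem ordW_eq_one_iff_compact {X : Type*} [NormedAddCommGroup X] [NormedSpace ℝ X]
    [CompleteSpace X] (K : Set (StrongDual ℝ X)) (hne : K.Nonempty)
    (hcomp : IsCompact ((fun f => StrongDual.toWeakDual f) '' K)) :
    (∀ ε : ℝ, 0 < ε → ordD (weakBasis X) (HKtree K ε) = 1) ↔ IsCompact K := by
  have hHne : ∀ ε : ℝ, (HKtree K ε).Nonempty := by
    intro ε
    obtain ⟨f, hf⟩ := hne
    exact ⟨[], ⟨by simp, f, hf, by simp⟩⟩
  constructor
  · intro h
    -- K is norm-closed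
    have hinj : Function.Injective (fun f : StrongDual ℝ X => StrongDual.toWeakDual f) :=
      fun a b hab => StrongDual.toWeakDual.injective hab
    have hKclosed : IsClosed K := by
      have hKeq : K = (fun f : StrongDual ℝ X => StrongDual.toWeakDual f) ⁻¹'
          ((fun f => StrongDual.toWeakDual f) '' K) := (Set.preimage_image_eq K hinj).symm
      rw [hKeq]
      exact hcomp.isClosed.preimage Dual.toWeakDual_continuous
    -- K is norm-bounded
    obtain ⟨M, hM⟩ : ∃ M, ∀ g ∈ K, ‖g‖ ≤ M := by
      have hpt : ∀ x : X, ∃ C, ∀ i : K, ‖(i.1 : X →L[ℝ] ℝ) x‖ ≤ C := by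
        intro x
        have hc : Continuous fun φ : WeakDual ℝ X => φ x := WeakDual.eval_continuous x
        obtain ⟨C, hC⟩ := (hcomp.image hc).isBounded.exists_norm_le
        refine ⟨C, fun i => ?_⟩
        exact hC _ ⟨StrongDual.toWeakDual i.1, ⟨i.1, i.2, rfl⟩, rfl⟩
      obtain ⟨M, hM⟩ := banach_steinhaus hpt
      exact ⟨M, fun g hg => hM ⟨g, hg⟩⟩
    -- K is totally bounded
    have htb : TotallyBounded K := by
      rw [Metric.totallyBounded_iff]
      intro ε' hε'
      set ε := ε' / 2 with hεdef
      have hε : 0 < ε := by positivity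
      have h1 := (ordD_eq_one_iff _ _ (hHne ε)).mp (h ε hε)
      obtain ⟨U, hU, hUx⟩ : ∃ U ∈ weakBasis X, ∀ x ∈ U, [x] ∉ HKtree K ε := by
        by_contra hcon
        push_neg at hcon
        have hnilmem : ([] : List X) ∈ HKtree K ε := by
          obtain ⟨f, hf⟩ := hne
          exact ⟨by simp, f, hf, by simp⟩
        have hmem : ([] : List X) ∈ derivD (weakBasis X) (HKtree K ε) := by
          refine ⟨hnilmem, fun U hU => ?_⟩
          obtain ⟨x, hx1, hx2⟩ := hcon U hU
          exact ⟨x, hx1, by simpa using hx2⟩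
        rw [h1] at hmem
        exact hmem
      obtain ⟨F, δ, hδ, hUeq⟩ := hU
      -- the key pointwise estimate
      have key : ∀ g ∈ K, ∀ x : X, (∀ f ∈ F, f x = 0) → ‖x‖ ≤ 1 → |g x| ≤ ε := by
        intro g hg x hx hxn
        have h1x : ∀ y : X, (∀ f ∈ F, f y = 0) → ‖y‖ ≤ 1 → g y < ε := by
          intro y hy hyn
          by_contra hcon
          push_neg at hcon
          refine hUx y ?_ ⟨by simpa using hyn, g, hg, by simpa using hcon⟩
          rw [hUeq]
          intro f hf
          rw [hy f hf]
          simpa using hδ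
        have hpos := h1x x hx hxn
        have hneg := h1x (-x) (fun f hf => by rw [map_neg, hx f hf, neg_zero]) (by simpa using hxn)
        rw [map_neg] at hneg
        exact abs_le.mpr ⟨by linarith, hpos.le⟩
      -- every member of K is within ε of the span of F
      set S : Submodule ℝ (StrongDual ℝ X) := Submodule.span ℝ (F : Set (StrongDual ℝ X)) with hSdef
      have happrox : ∀ g ∈ K, ∃ e ∈ S, ‖g - e‖ ≤ ε := by
        intro g hg
        set N : Submodule ℝ X := ⨅ f : F, LinearMap.ker ((f.1 : X →L[ℝ] ℝ) : X →ₗ[ℝ] ℝ) with hNdef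
        have hNmem : ∀ x : X, x ∈ N ↔ ∀ f ∈ F, f x = 0 := by
          intro x
          simp [hNdef, Submodule.mem_iInf, LinearMap.mem_ker, Subtype.forall]
        obtain ⟨g', hg'ext, hg'norm⟩ := exists_extension_norm_eq N (g.comp (Submodule.subtypeL N))
        have hrest : ‖g.comp (Submodule.subtypeL N)‖ ≤ ε := by
          refine ContinuousLinearMap.opNorm_le_bound _ hε.le fun y => ?_
          rcases eq_or_ne (y : X) 0 with h0 | h0
          · simp [ContinuousLinearMap.comp_apply, h0]
          · have hy : (0:ℝ) < ‖(y : X)‖ := norm_pos_iff.mpr h0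
            have hz : |g (‖(y:X)‖⁻¹ • (y:X))| ≤ ε := by
              refine key g hg _ (fun f hf => ?_) ?_
              · rw [map_smul]
                rw [(hNmem (y:X)).mp y.2 f hf]
                simp
              · rw [norm_smul, norm_inv, norm_norm, inv_mul_cancel₀ hy.ne']
            rw [map_smul, smul_eq_mul, abs_mul, abs_inv, abs_norm] at hz
            have h3 : |g (y : X)| ≤ ε * ‖(y : X)‖ := by
              have h4 := mul_le_mul_of_nonneg_left hz hy.le
              rwa [← mul_assoc, mul_inv_cancel₀ hy.ne', one_mul, mul_comm] at h4
            simpa [ContinuousLinearMap.comp_apply] using h3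
        have hnorm' : ‖g'‖ ≤ ε := by rw [hg'norm]; exact hrest
        have hspan : ((g - g' : StrongDual ℝ X) : X →ₗ[ℝ] ℝ) ∈
            Submodule.span ℝ (Set.range fun f : F => ((f.1 : X →L[ℝ] ℝ) : X →ₗ[ℝ] ℝ)) := by
          apply mem_span_of_iInf_ker_le_ker
          intro x hx
          have hxN : x ∈ N := by
            rw [hNdef]
            rw [Submodule.mem_iInf]
            intro f
            exact (Submodule.mem_iInf _).mp hx f
          rw [LinearMap.mem_ker]
          have := hg'ext ⟨x, hxN⟩
          simp only [ContinuousLinearMap.comp_apply, Submodule.subtypeL_apply] at this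
          simp [this]
        have himg : (Set.range fun f : F => ((f.1 : X →L[ℝ] ℝ) : X →ₗ[ℝ] ℝ)) =
            (ContinuousLinearMap.coeLM ℝ) '' (F : Set (StrongDual ℝ X)) := by
          ext φ
          constructor
          · rintro ⟨f, rfl⟩
            exact ⟨f.1, f.2, rfl⟩
          · rintro ⟨f, hf, rfl⟩
            exact ⟨⟨f, hf⟩, rfl⟩
        rw [himg, Submodule.span_image] at hspan
        obtain ⟨e, heS, hee⟩ := hspan
        have heq : e = g - g' := ContinuousLinearMap.coe_injective hee
        refine ⟨e, heS, ?_⟩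
        rw [heq, sub_sub_cancel]
        exact hnorm'
      -- finish via a finite net in a ball of the finite-dimensional space S
      haveI : FiniteDimensional ℝ S := FiniteDimensional.span_of_finite ℝ F.finite_toSet
      have hC : IsCompact (((↑) : S → StrongDual ℝ X) '' Metric.closedBall 0 (M + ε)) :=
        (isCompact_closedBall (0 : S) (M + ε)).image continuous_subtype_val
      obtain ⟨t, htfin, htcover⟩ := Metric.totallyBounded_iff.mp hC.totallyBounded ε hε
      refine ⟨t, htfin, fun g hg => ?_⟩
      obtain ⟨e, heS, hge⟩ := happrox g hg
      have heC : e ∈ ((↑) : S → StrongDual ℝ X) '' Metric.closedBall 0 (M + ε) := by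
        refine ⟨⟨e, heS⟩, ?_, rfl⟩
        rw [Metric.mem_closedBall]; refine (dist_zero_right (⟨e, heS⟩ : S)).le.trans ?_
        show ‖e‖ ≤ M + ε
        calc ‖e‖ = ‖g - (g - e)‖ := by rw [sub_sub_cancel]
          _ ≤ ‖g‖ + ‖g - e‖ := norm_sub_le _ _
          _ ≤ M + ε := add_le_add (hM g hg) hge
      obtain ⟨y, hy, hball⟩ := Set.mem_iUnion₂.mp (htcover heC)
      refine Set.mem_iUnion₂.mpr ⟨y, hy, ?_⟩
      rw [Metric.mem_ball] at hball ⊢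
      calc dist g y ≤ dist g e + dist e y := dist_triangle _ _ _
        _ < ε + ε := by
            refine add_lt_add_of_le_of_lt ?_ hball
            rw [dist_eq_norm]; exact hge
        _ = ε' := by rw [hεdef]; ring
    exact isCompact_iff_totallyBounded_isComplete.mpr ⟨htb, hKclosed.isComplete⟩
  · intro hK ε hε
    rw [ordD_eq_one_iff _ _ (hHne ε), Set.eq_empty_iff_forall_notMem]
    rintro tt ⟨htH, hext⟩
    obtain ⟨s, hsfin, hscover⟩ := Metric.totallyBounded_iff.mp hK.totallyBounded (ε/2) (by positivity)
    obtain ⟨x, hxU, hxH⟩ := hext {x | ∀ f ∈ hsfin.toFinset, |f x| < ε/2}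
      ⟨hsfin.toFinset, ε/2, by positivity, rfl⟩
    obtain ⟨hnorm, gg, hgK, hgge⟩ := hxH
    have hx1 : ‖x‖ ≤ 1 := hnorm x (by simp)
    have hgx : ε ≤ gg x := hgge x (by simp)
    obtain ⟨f, hf, hfd⟩ := Set.mem_iUnion₂.mp (hscover hgK)
    have hfd' : ‖gg - f‖ ≤ ε/2 := by
      rw [Metric.mem_ball, dist_eq_norm] at hfd
      exact hfd.le
    have hfx : |f x| < ε/2 := hxU f (hsfin.mem_toFinset.mpr hf)
    have hdiff : |gg x - f x| ≤ ε/2 := by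
      have h1 : |(gg - f) x| ≤ ‖gg - f‖ * ‖x‖ := (gg - f).le_opNorm x
      have h2 : ‖gg - f‖ * ‖x‖ ≤ ε/2 := by
        calc ‖gg - f‖ * ‖x‖ ≤ (ε/2) * 1 :=
              mul_le_mul hfd' hx1 (norm_nonneg _) (by positivity)
          _ = ε/2 := mul_one _
      simpa using h1.trans h2
    have := abs_le.mp hdiff
    have := le_abs_self (f x)
    linarith [abs_le.mp hdiff, le_abs_self (f x)]
end

section
/- Let X be a Banach space and K ⊆ X* nonempty, w*-compact, and convex. If 0 < δ < ε/8 and ζ is an ordinal with ζ < o_w(H^K_ε), then ζ·2 < o_w(H^K_δ). -/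
open NormedSpace

namespace OrdWProof

/-! ### Generic facts about transfinite derivation -/

section General
variable {α : Type*} {d : Set α → Set α} {K K' : Set α}

@[simp] lemma derivIter_zero (d : Set α → Set α) (K : Set α) : derivIter d K 0 = K :=
  Ordinal.limitRecOn_zero ..

@[simp] lemma derivIter_succ (d : Set α → Set α) (K : Set α) (o : Ordinal) :
    derivIter d K (Order.succ o) = d (derivIter d K o) :=
  Ordinal.limitRecOn_succ ..

lemma derivIter_limit (d : Set α → Set α) (K : Set α) {o : Ordinal} (ho : Order.IsSuccLimit o) :
    derivIter d K o = ⋂ ζ : Set.Iio o, derivIter d K ζ.1 :=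
  Ordinal.limitRecOn_limit _ _ _ _ ho

lemma derivIter_antitone (hd : ∀ C, d C ⊆ C) {a b : Ordinal} (hab : a ≤ b) :
    derivIter d K b ⊆ derivIter d K a := by
  induction b using Ordinal.induction with
  | _ b IH =>
    rcases Ordinal.zero_or_succ_or_isSuccLimit b with rfl | ⟨c, rfl⟩ | hb
    · rw [nonpos_iff_eq_zero.mp hab]
    · rcases (Order.le_succ_iff_eq_or_le.mp hab) with rfl | h
      · exact subset_rfl
      · rw [derivIter_succ]
        exact (hd _).trans (IH c (Order.lt_succ c) h)
    · rcases eq_or_lt_of_le hab with rfl | h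
      · exact subset_rfl
      · rw [derivIter_limit d K hb]
        exact (Set.iInter_subset (fun (ζ : Set.Iio b) => derivIter d K ζ.1) ⟨a, h⟩)

lemma derivIter_subset (hd : ∀ C, d C ⊆ C) (a : Ordinal) : derivIter d K a ⊆ K := by
  have := derivIter_antitone (K := K) hd (zero_le (a := a))
  rwa [derivIter_zero] at this

lemma derivIter_mono (hd : Monotone d) (hKK' : K ⊆ K') (a : Ordinal) :
    derivIter d K a ⊆ derivIter d K' a := by
  induction a using Ordinal.induction with
  | _ a IH =>
    rcases Ordinal.zero_or_succ_or_isSuccLimit a with rfl | ⟨c, rfl⟩ | ha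
    · simpa
    · rw [derivIter_succ, derivIter_succ]
      exact hd (IH c (Order.lt_succ c))
    · rw [derivIter_limit d K ha, derivIter_limit d K' ha]
      exact Set.iInter_mono fun ζ => IH ζ.1 ζ.2

lemma derivIter_add (hmono : Monotone d) (hd : ∀ C, d C ⊆ C) (a : Ordinal) :
    ∀ b : Ordinal, derivIter d (derivIter d K a) b ⊆ derivIter d K (a + b) := by
  intro b
  induction b using Ordinal.induction with
  | _ b IH =>
    rcases Ordinal.zero_or_succ_or_isSuccLimit b with rfl | ⟨c, rfl⟩ | hb
    · rw [derivIter_zero, add_zero]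
    · rw [derivIter_succ, Ordinal.add_succ, derivIter_succ]
      exact hmono (IH c (Order.lt_succ c))
    · rw [derivIter_limit d _ hb, derivIter_limit d K (Ordinal.isSuccLimit_add a hb)]
      intro x hx
      rw [Set.mem_iInter] at hx ⊢
      rintro ⟨e, he⟩
      rcases le_or_gt e a with hea | hae
      · have h0 := hx ⟨0, hb.pos⟩
        have h0' := IH 0 hb.pos h0
        rw [add_zero] at h0'
        exact derivIter_antitone hd hea h0'
      · have hsub : a + (e - a) = e := Ordinal.add_sub_cancel_of_le hae.le
        have hlt : e - a < b := by
          have : a + (e - a) < a + b := by rw [hsub]; exact he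
          exact (add_lt_add_iff_left a).mp this
        have := IH (e - a) hlt (hx ⟨e - a, hlt⟩)
        rwa [hsub] at this

end General

section TreeBasic
variable {Λ : Type*} {D : Set (Set Λ)}

lemma derivD_subset (D : Set (Set Λ)) (H : Set (List Λ)) : derivD D H ⊆ H := fun _ ht => ht.1

lemma derivD_mono (D : Set (Set Λ)) : Monotone (derivD D) := by
  intro H H' hHH' t ht
  exact ⟨hHH' ht.1, fun U hU => by
    obtain ⟨x, hx, hm⟩ := ht.2 U hU
    exact ⟨x, hx, hHH' hm⟩⟩

end TreeBasic

/-! ### Weak neighborhood basis facts -/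

section WB
variable {X : Type*} [NormedAddCommGroup X] [NormedSpace ℝ X]

lemma univ_mem_weakBasis : (Set.univ : Set X) ∈ weakBasis X := by
  refine ⟨∅, 1, one_pos, ?_⟩
  ext x; simp

lemma weakBasis_refine {U : Set X} (hU : U ∈ weakBasis X) (φ : StrongDual ℝ X) {θ : ℝ} (hθ : 0 < θ) :
    ∃ U' ∈ weakBasis X, U' ⊆ U ∧ ∀ x ∈ U', |φ x| < θ := by
  classical
  obtain ⟨F, δ, hδ, rfl⟩ := hU
  refine ⟨{x | ∀ f ∈ insert φ F, |f x| < min δ θ}, ⟨insert φ F, min δ θ, lt_min hδ hθ, rfl⟩, ?_, ?_⟩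
  · intro x hx f hf
    exact lt_of_lt_of_le (hx f (Finset.mem_insert_of_mem hf)) (min_le_left _ _)
  · intro x hx
    exact lt_of_lt_of_le (hx φ (Finset.mem_insert_self _ _)) (min_le_right _ _)

lemma weakBasis_inter {U₁ U₂ : Set X} (h₁ : U₁ ∈ weakBasis X) (h₂ : U₂ ∈ weakBasis X) :
    ∃ U₃ ∈ weakBasis X, U₃ ⊆ U₁ ∩ U₂ := by
  classical
  obtain ⟨F₁, δ₁, hδ₁, rfl⟩ := h₁
  obtain ⟨F₂, δ₂, hδ₂, rfl⟩ := h₂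
  refine ⟨_, ⟨F₁ ∪ F₂, min δ₁ δ₂, lt_min hδ₁ hδ₂, rfl⟩, ?_⟩
  intro x hx
  constructor
  · intro f hf
    exact lt_of_lt_of_le (hx f (Finset.mem_union_left _ hf)) (min_le_left _ _)
  · intro f hf
    exact lt_of_lt_of_le (hx f (Finset.mem_union_right _ hf)) (min_le_right _ _)

end WB

/-! ### Weak-star closure via finite evaluations -/

section Closure
variable {X : Type*} [NormedAddCommGroup X] [NormedSpace ℝ X]

lemma isOpen_weak_basic (f : WeakDual ℝ X) (L : List X) (θ : ℝ) :
    IsOpen {g : WeakDual ℝ X | ∀ v ∈ L, |g v - f v| < θ} := by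
  classical
  have : {g : WeakDual ℝ X | ∀ v ∈ L, |g v - f v| < θ}
      = ⋂ v ∈ L.toFinset, {g : WeakDual ℝ X | |g v - f v| < θ} := by
    ext g; simp [List.mem_toFinset]
  rw [this]
  refine isOpen_biInter_finset fun v _ => ?_
  have hc : Continuous fun g : WeakDual ℝ X => |g v - f v| :=
    ((WeakDual.eval_continuous v).sub continuous_const).abs
  exact isOpen_lt hc continuous_const

lemma nhds_weak_basic {f : WeakDual ℝ X} {N : Set (WeakDual ℝ X)} (hN : N ∈ nhds f) :
    ∃ (L : List X) (θ : ℝ), 0 < θ ∧ {g : WeakDual ℝ X | ∀ v ∈ L, |g v - f v| < θ} ⊆ N := by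
  classical
  have hemb : nhds f = Filter.comap (fun (g : WeakDual ℝ X) (y : X) => g y)
      (nhds (fun y => f y)) := nhds_induced _ f
  rw [hemb, Filter.mem_comap] at hN
  obtain ⟨M, hM, hMN⟩ := hN
  rw [nhds_pi, Filter.mem_pi] at hM
  obtain ⟨I, hIfin, V, hV, hIV⟩ := hM
  obtain ⟨θfun, hθfun⟩ : ∃ θfun : X → ℝ, ∀ v, 0 < θfun v ∧ Metric.ball (f v) (θfun v) ⊆ V v := by
    refine ⟨fun v => Classical.choose (Metric.mem_nhds_iff.mp (hV v)), fun v => ?_⟩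
    exact Classical.choose_spec (Metric.mem_nhds_iff.mp (hV v))
  set Fs : Finset ℝ := insert 1 (hIfin.toFinset.image θfun) with hFs
  have hFsne : Fs.Nonempty := ⟨1, Finset.mem_insert_self _ _⟩
  set θ := Fs.min' hFsne with hθdef
  have hθpos : 0 < θ := by
    have hmem : θ ∈ Fs := Fs.min'_mem hFsne
    rcases Finset.mem_insert.mp hmem with h1 | h2
    · rw [h1]; exact one_pos
    · obtain ⟨v, _, hv⟩ := Finset.mem_image.mp h2
      rw [← hv]
      exact (hθfun v).1
  have hθle : ∀ v ∈ I, θ ≤ θfun v := by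
    intro v hv
    apply Finset.min'_le
    exact Finset.mem_insert_of_mem (Finset.mem_image_of_mem _ (hIfin.mem_toFinset.mpr hv))
  refine ⟨hIfin.toFinset.toList, θ, hθpos, ?_⟩
  intro g hg
  apply hMN
  apply hIV
  intro v hv
  have hvL : v ∈ hIfin.toFinset.toList := by
    rw [Finset.mem_toList]; exact hIfin.mem_toFinset.mpr hv
  have hgv := hg v hvL
  have hb : (g v) ∈ Metric.ball (f v) (θfun v) := by
    rw [Metric.mem_ball, Real.dist_eq]
    exact lt_of_lt_of_le hgv (hθle v hv)
  exact (hθfun v).2 hb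

/-- Characterization of weak-star closure membership by finite evaluations. -/
lemma mem_closure_weak {S : Set (WeakDual ℝ X)} {f : WeakDual ℝ X} :
    f ∈ closure S ↔ ∀ (L : List X) (θ : ℝ), 0 < θ → ∃ g ∈ S, ∀ v ∈ L, |g v - f v| < θ := by
  constructor
  · intro hf L θ hθ
    have hopen := isOpen_weak_basic f L θ
    have hfm : f ∈ {g : WeakDual ℝ X | ∀ v ∈ L, |g v - f v| < θ} := by
      intro v _; simpa using hθ
    obtain ⟨g, hg1, hg2⟩ := _root_.mem_closure_iff.mp hf _ hopen hfm
    exact ⟨g, hg2, hg1⟩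
  · intro happ
    rw [mem_closure_iff_nhds]
    intro N hN
    obtain ⟨L, θ, hθ, hsub⟩ := nhds_weak_basic hN
    obtain ⟨g, hgS, hg⟩ := happ L θ hθ
    exact ⟨g, hsub hg, hgS⟩

end Closure

/-! ### Midpoints in the weak dual -/

section Mid
variable {X : Type*} [NormedAddCommGroup X] [NormedSpace ℝ X]

noncomputable def mid (f g : WeakDual ℝ X) : WeakDual ℝ X := (2⁻¹ : ℝ) • (f + g)

lemma mid_apply (f g : WeakDual ℝ X) (x : X) : mid f g x = (f x + g x) / 2 := by
  show (2⁻¹ : ℝ) * ((f + g) x) = _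
  show (2⁻¹ : ℝ) * (f x + g x) = _
  ring

lemma mid_self (f : WeakDual ℝ X) : mid f f = f := by
  unfold mid
  rw [← two_smul ℝ f, smul_smul]
  norm_num

lemma mid_comm (f g : WeakDual ℝ X) : mid f g = mid g f := by unfold mid; rw [add_comm]

/-- The image of `K` in the weak-star dual. -/
def Kw (K : Set (StrongDual ℝ X)) : Set (WeakDual ℝ X) := (fun f => StrongDual.toWeakDual f) '' K

lemma mid_mem_Kw {K : Set (StrongDual ℝ X)} (hconv : Convex ℝ K) {f g : WeakDual ℝ X}
    (hf : f ∈ Kw K) (hg : g ∈ Kw K) : mid f g ∈ Kw K := by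
  obtain ⟨f₀, hf₀, rfl⟩ := hf
  obtain ⟨g₀, hg₀, rfl⟩ := hg
  refine ⟨(2⁻¹ : ℝ) • f₀ + (2⁻¹ : ℝ) • g₀, ?_, ?_⟩
  · exact hconv hf₀ hg₀ (by norm_num) (by norm_num) (by norm_num)
  · show StrongDual.toWeakDual (2⁻¹ • f₀ + 2⁻¹ • g₀)
        = (2⁻¹ : ℝ) • (StrongDual.toWeakDual f₀ + StrongDual.toWeakDual g₀)
    rw [map_add, map_smul, map_smul, smul_add]

end Mid

/-! ### The weak-star set derivation -/

section Dset
variable {X : Type*} [NormedAddCommGroup X] [NormedSpace ℝ X]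

/-- One step of the weak-star derivation of a set of functionals at level `ρ`. -/
def Dset (ρ : ℝ) (C : Set (WeakDual ℝ X)) : Set (WeakDual ℝ X) :=
  {f ∈ C | ∀ U ∈ weakBasis X,
    f ∈ closure {g ∈ C | ∃ x : X, ‖x‖ ≤ 1 ∧ x ∈ U ∧ ρ ≤ g x}}

lemma Dset_subset (ρ : ℝ) : ∀ C : Set (WeakDual ℝ X), Dset ρ C ⊆ C := fun _ _ hf => hf.1

lemma Dset_mono (ρ : ℝ) : Monotone (Dset (X := X) ρ) := by
  intro C C' hCC' f hf
  refine ⟨hCC' hf.1, fun U hU => ?_⟩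
  refine closure_mono ?_ (hf.2 U hU)
  intro g hg
  exact ⟨hCC' hg.1, hg.2⟩

lemma isClosed_Dset (ρ : ℝ) {C : Set (WeakDual ℝ X)} (hC : IsClosed C) :
    IsClosed (Dset ρ C) := by
  have : Dset ρ C = C ∩ ⋂ U ∈ weakBasis X,
      closure {g ∈ C | ∃ x : X, ‖x‖ ≤ 1 ∧ x ∈ U ∧ ρ ≤ g x} := by
    ext f
    constructor
    · rintro ⟨h1, h2⟩; exact ⟨h1, Set.mem_iInter₂.mpr h2⟩
    · rintro ⟨h1, h2⟩; exact ⟨h1, Set.mem_iInter₂.mp h2⟩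
  rw [this]
  exact hC.inter (isClosed_biInter fun U _ => isClosed_closure)

lemma isClosed_dIter (ρ : ℝ) {C : Set (WeakDual ℝ X)} (hC : IsClosed C) (γ : Ordinal) :
    IsClosed (derivIter (Dset ρ) C γ) := by
  induction γ using Ordinal.induction with
  | _ γ IH =>
    rcases Ordinal.zero_or_succ_or_isSuccLimit γ with rfl | ⟨c, rfl⟩ | hγ
    · simpa
    · rw [derivIter_succ]
      exact isClosed_Dset ρ (IH c (Order.lt_succ c))
    · rw [derivIter_limit _ _ hγ]
      exact isClosed_iInter fun ζ => IH ζ.1 ζ.2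

lemma isClosed_geL (t : List X) (ε : ℝ) : IsClosed {g : WeakDual ℝ X | ∀ v ∈ t, ε ≤ g v} := by
  classical
  have : {g : WeakDual ℝ X | ∀ v ∈ t, ε ≤ g v}
      = ⋂ v ∈ t.toFinset, {g : WeakDual ℝ X | ε ≤ g v} := by
    ext g; simp [List.mem_toFinset]
  rw [this]
  refine isClosed_biInter fun v _ => ?_
  exact isClosed_le continuous_const (WeakDual.eval_continuous v)

end Dset

/-! ### From the tree derivation to the set derivation -/

section Core
variable {X : Type*} [NormedAddCommGroup X] [NormedSpace ℝ X] {K : Set (StrongDual ℝ X)}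

lemma L2 (hcomp : IsCompact (Kw K)) (ε : ℝ) :
    ∀ γ : Ordinal, ∀ t ∈ derivIter (derivD (weakBasis X)) (HKtree K ε) γ,
      ∃ f ∈ derivIter (Dset ε) (Kw K) γ, ∀ v ∈ t, ε ≤ f v := by
  have hKwclosed : IsClosed (Kw K) := hcomp.isClosed
  intro γ
  induction γ using Ordinal.induction with
  | _ γ IH =>
  rcases Ordinal.zero_or_succ_or_isSuccLimit γ with rfl | ⟨c, rfl⟩ | hγ
  · intro t ht
    rw [derivIter_zero] at ht ⊢
    obtain ⟨_, f₀, hf₀, hv⟩ := ht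
    exact ⟨StrongDual.toWeakDual f₀, ⟨f₀, hf₀, rfl⟩, hv⟩
  · intro t ht
    rw [derivIter_succ] at ht ⊢
    obtain ⟨ht1, ht2⟩ := ht
    set A : Set X → Set (WeakDual ℝ X) := fun U =>
      {g | g ∈ derivIter (Dset ε) (Kw K) c ∧ (∀ v ∈ t, ε ≤ g v) ∧
        ∃ x : X, ‖x‖ ≤ 1 ∧ x ∈ U ∧ ε ≤ g x} with hA
    have hAsub : ∀ U, A U ⊆ derivIter (Dset ε) (Kw K) c := fun U g hg => hg.1
    have hAKw : ∀ U, A U ⊆ Kw K := fun U =>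
      (hAsub U).trans (derivIter_subset (Dset_subset ε) c)
    haveI : Nonempty {U : Set X // U ∈ weakBasis X} := ⟨⟨Set.univ, univ_mem_weakBasis⟩⟩
    have hnon : ∀ U : {U : Set X // U ∈ weakBasis X}, (closure (A U.1)).Nonempty := by
      rintro ⟨U, hU⟩
      obtain ⟨x, hxU, hxt⟩ := ht2 U hU
      obtain ⟨g, hg1, hg2⟩ := IH c (Order.lt_succ c) (t ++ [x]) hxt
      have hxnorm : ‖x‖ ≤ 1 :=
        (derivIter_subset (derivD_subset (weakBasis X)) c hxt).1 x (by simp)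
      exact ⟨g, subset_closure
        ⟨hg1, fun v hv => hg2 v (by simp [hv]), x, hxnorm, hxU, hg2 x (by simp)⟩⟩
    have hdir : Directed (· ⊇ ·)
        fun U : {U : Set X // U ∈ weakBasis X} => closure (A U.1) := by
      rintro ⟨U₁, hU₁⟩ ⟨U₂, hU₂⟩
      obtain ⟨U₃, hU₃, hsub⟩ := weakBasis_inter hU₁ hU₂
      refine ⟨⟨U₃, hU₃⟩, closure_mono ?_, closure_mono ?_⟩
      · rintro g ⟨hg1, hg2, x, hx1, hx2, hx3⟩
        exact ⟨hg1, hg2, x, hx1, (hsub hx2).1, hx3⟩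
      · rintro g ⟨hg1, hg2, x, hx1, hx2, hx3⟩
        exact ⟨hg1, hg2, x, hx1, (hsub hx2).2, hx3⟩
    have hcpt : ∀ U : {U : Set X // U ∈ weakBasis X}, IsCompact (closure (A U.1)) :=
      fun U => hcomp.of_isClosed_subset isClosed_closure
        (closure_minimal (hAKw U.1) hKwclosed)
    obtain ⟨f, hf⟩ := IsCompact.nonempty_iInter_of_directed_nonempty_isCompact_isClosed
      _ hdir hnon hcpt (fun U => isClosed_closure)
    rw [Set.mem_iInter] at hf
    have hfC : f ∈ derivIter (Dset ε) (Kw K) c ∧ ∀ v ∈ t, ε ≤ f v := by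
      have hsub : closure (A Set.univ) ⊆
          (derivIter (Dset ε) (Kw K) c ∩ {g | ∀ v ∈ t, ε ≤ g v}) := by
        apply closure_minimal
        · rintro g ⟨hg1, hg2, _⟩
          exact ⟨hg1, hg2⟩
        · exact (isClosed_dIter ε hKwclosed c).inter (isClosed_geL t ε)
      have := hsub (hf ⟨Set.univ, univ_mem_weakBasis⟩)
      exact ⟨this.1, this.2⟩
    refine ⟨f, ⟨hfC.1, fun U hU => ?_⟩, hfC.2⟩
    refine closure_mono ?_ (hf ⟨U, hU⟩)
    rintro g ⟨hg1, _, x, hx1, hx2, hx3⟩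
    exact ⟨hg1, x, hx1, hx2, hx3⟩
  · intro t ht
    rw [derivIter_limit _ _ hγ] at ht ⊢
    rw [Set.mem_iInter] at ht
    haveI : Nonempty (Set.Iio γ) := ⟨⟨0, hγ.pos⟩⟩
    set B : Set.Iio γ → Set (WeakDual ℝ X) := fun c =>
      derivIter (Dset ε) (Kw K) c.1 ∩ {g | ∀ v ∈ t, ε ≤ g v} with hB
    have hnon : ∀ c : Set.Iio γ, (B c).Nonempty := by
      rintro ⟨c, hc⟩
      obtain ⟨g, hg1, hg2⟩ := IH c hc t (ht ⟨c, hc⟩)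
      exact ⟨g, hg1, hg2⟩
    have hdir : Directed (· ⊇ ·) B := by
      rintro ⟨c₁, hc₁⟩ ⟨c₂, hc₂⟩
      refine ⟨⟨max c₁ c₂, Set.mem_Iio.mpr (max_lt (Set.mem_Iio.mp hc₁) (Set.mem_Iio.mp hc₂))⟩, ?_, ?_⟩
      · exact Set.inter_subset_inter_left _
          (derivIter_antitone (Dset_subset ε) (le_max_left c₁ c₂))
      · exact Set.inter_subset_inter_left _
          (derivIter_antitone (Dset_subset ε) (le_max_right c₁ c₂))
    have hclB : ∀ c : Set.Iio γ, IsClosed (B c) := fun c =>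
      (isClosed_dIter ε hKwclosed c.1).inter (isClosed_geL t ε)
    have hcpt : ∀ c : Set.Iio γ, IsCompact (B c) := fun c =>
      hcomp.of_isClosed_subset (hclB c)
        ((Set.inter_subset_left).trans (derivIter_subset (Dset_subset ε) c.1))
    obtain ⟨f, hf⟩ := IsCompact.nonempty_iInter_of_directed_nonempty_isCompact_isClosed
      _ hdir hnon hcpt hclB
    rw [Set.mem_iInter] at hf
    refine ⟨f, Set.mem_iInter.mpr fun c => (hf c).1, (hf ⟨0, hγ.pos⟩).2⟩

end Core

/-! ### Midpoint transfer of the set derivation (uses convexity) -/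

section LGenSec
variable {X : Type*} [NormedAddCommGroup X] [NormedSpace ℝ X] {K : Set (StrongDual ℝ X)}

lemma LGen {ε : ℝ} (hε : 0 < ε) (c : WeakDual ℝ X) (B : Set (WeakDual ℝ X))
    (hbase : ∀ f ∈ Kw K, mid f c ∈ B) :
    ∀ γ : Ordinal, ∀ f ∈ derivIter (Dset ε) (Kw K) γ,
      mid f c ∈ derivIter (Dset (ε/4)) B γ := by
  intro γ
  induction γ using Ordinal.induction with
  | _ γ IH =>
  rcases Ordinal.zero_or_succ_or_isSuccLimit γ with rfl | ⟨d, rfl⟩ | hγ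
  · intro f hf
    rw [derivIter_zero] at hf ⊢
    exact hbase f hf
  · intro f hf
    rw [derivIter_succ] at hf ⊢
    obtain ⟨hf1, hf2⟩ := hf
    refine ⟨IH d (Order.lt_succ d) f hf1, fun U hU => ?_⟩
    rw [mem_closure_weak]
    intro L θ hθ
    obtain ⟨U', hU', hU'sub, hU'small⟩ :=
      weakBasis_refine hU (WeakDual.toStrongDual c) (by linarith : (0:ℝ) < ε/2)
    have hcl := hf2 U' hU'
    rw [mem_closure_weak] at hcl
    obtain ⟨g, ⟨hgmem, x, hxn, hxU', hgx⟩, hclose⟩ := hcl L (2*θ) (by linarith)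
    refine ⟨mid g c, ⟨IH d (Order.lt_succ d) g hgmem, x, hxn, hU'sub hxU', ?_⟩, ?_⟩
    · have hcx : |c x| < ε/2 := by
        have := hU'small x hxU'
        rwa [WeakDual.toStrongDual_apply] at this
      have hcx' : -(ε/2) < c x := (abs_lt.mp hcx).1
      rw [mid_apply]
      linarith
    · intro v hv
      have h2 := hclose v hv
      rw [mid_apply, mid_apply,
        show (g v + c v) / 2 - (f v + c v) / 2 = (g v - f v) / 2 by ring]
      rw [abs_div, abs_two]
      linarith [abs_nonneg (g v - f v)]
  · intro f hf
    rw [derivIter_limit _ _ hγ] at hf ⊢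
    rw [Set.mem_iInter] at hf ⊢
    rintro ⟨e, he⟩
    exact IH e he f (hf ⟨e, he⟩)

end LGenSec

/-! ### From the set derivation back to the tree derivation -/

section L1Sec
variable {X : Type*} [NormedAddCommGroup X] [NormedSpace ℝ X] {K : Set (StrongDual ℝ X)}

lemma L1 {ρ : ℝ} (hρ : 0 < ρ) :
    ∀ γ : Ordinal, ∀ f ∈ derivIter (Dset ρ) (Kw K) γ, ∀ t : List X,
      (∀ x ∈ t, ‖x‖ ≤ 1) → (∀ x ∈ t, ρ/2 + ρ/4 * (2⁻¹:ℝ)^t.length ≤ f x) →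
      t ∈ derivIter (derivD (weakBasis X)) (HKtree K (ρ/2)) γ := by
  intro γ
  induction γ using Ordinal.induction with
  | _ γ IH =>
  rcases Ordinal.zero_or_succ_or_isSuccLimit γ with rfl | ⟨d, rfl⟩ | hγ
  · intro f hf t hn hb
    rw [derivIter_zero] at hf ⊢
    obtain ⟨f₀, hf₀, rfl⟩ := hf
    refine ⟨hn, f₀, hf₀, fun x hx => ?_⟩
    have h1 := hb x hx
    have h2 : 0 < (2⁻¹:ℝ)^t.length := by positivity
    have h3 : (StrongDual.toWeakDual f₀) x = f₀ x := rfl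
    nlinarith
  · intro f hf t hn hb
    rw [derivIter_succ] at hf ⊢
    obtain ⟨hf1, hf2⟩ := hf
    refine ⟨IH d (Order.lt_succ d) f hf1 t hn hb, fun U hU => ?_⟩
    have hcl := hf2 U hU
    rw [mem_closure_weak] at hcl
    have hθpos : 0 < ρ/8 * (2⁻¹:ℝ)^t.length := by positivity
    obtain ⟨g, ⟨hgmem, x, hxn, hxU, hgx⟩, hclose⟩ := hcl t _ hθpos
    refine ⟨x, hxU, IH d (Order.lt_succ d) g hgmem (t ++ [x]) ?_ ?_⟩
    · intro v hv
      rcases List.mem_append.mp hv with h | h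
      · exact hn v h
      · rw [List.mem_singleton.mp h]; exact hxn
    · intro v hv
      have hlen : (t ++ [x]).length = t.length + 1 := by simp
      rw [hlen]
      have hpow : (2⁻¹:ℝ)^(t.length + 1) = (2⁻¹:ℝ)^t.length * 2⁻¹ := pow_succ _ _
      have hq : (0:ℝ) < (2⁻¹:ℝ)^t.length := by positivity
      have hq1 : (2⁻¹:ℝ)^t.length ≤ 1 :=
        pow_le_one₀ (by norm_num) (by norm_num)
      rcases List.mem_append.mp hv with h | h
      · have h1 := hb v h
        have h2 := (abs_lt.mp (hclose v h)).1
        rw [hpow]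
        nlinarith
      · rw [List.mem_singleton.mp h]
        rw [hpow]
        nlinarith
  · intro f hf t hn hb
    rw [derivIter_limit _ _ hγ] at hf ⊢
    rw [Set.mem_iInter] at hf ⊢
    rintro ⟨e, he⟩
    exact IH e he f (hf ⟨e, he⟩) t hn hb

end L1Sec

section Assemble
variable {X : Type*} [NormedAddCommGroup X] [NormedSpace ℝ X]

lemma HKtree_anti {K : Set (StrongDual ℝ X)} {ρ ρ' : ℝ} (h : ρ' ≤ ρ) :
    HKtree K ρ ⊆ HKtree K ρ' := by
  rintro t ⟨hn, f, hfK, hv⟩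
  exact ⟨hn, f, hfK, fun x hx => le_trans h (hv x hx)⟩

end Assemble

end OrdWProof

open OrdWProof

theorem ordW_double {X : Type*} [NormedAddCommGroup X] [NormedSpace ℝ X]
    [CompleteSpace X] (K : Set (StrongDual ℝ X)) (hne : K.Nonempty)
    (hcomp : IsCompact ((fun f => StrongDual.toWeakDual f) '' K)) (hconv : Convex ℝ K)
    (ε δ : ℝ) (hδ : 0 < δ) (hδε : δ < ε / 8) (ζ : Ordinal)
    (h : (derivIter (derivD (weakBasis X)) (HKtree K ε) ζ).Nonempty) :
    (derivIter (derivD (weakBasis X)) (HKtree K δ) (ζ * 2)).Nonempty := by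
  have hε : 0 < ε := by linarith
  have hcomp' : IsCompact (Kw K) := hcomp
  obtain ⟨t, ht⟩ := h
  -- Step 1: a functional surviving ζ steps of the set derivation at level ε
  obtain ⟨f₀, hf₀, -⟩ := L2 hcomp' ε ζ t ht
  -- Step 2: convexity doubles the set derivation index, at level ε/4
  have hC₂base : ∀ f ∈ Kw K, mid f f₀ ∈ derivIter (Dset (ε/4)) (Kw K) ζ := by
    intro f hf
    have hb : ∀ g ∈ Kw K, mid g f ∈ Kw K := fun g hg => mid_mem_Kw hconv hg hf
    have := LGen hε f (Kw K) hb ζ f₀ hf₀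
    rwa [mid_comm] at this
  have h2 : mid f₀ f₀ ∈ derivIter (Dset (ε/4))
      (derivIter (Dset (ε/4)) (Kw K) ζ) ζ :=
    LGen hε f₀ (derivIter (Dset (ε/4)) (Kw K) ζ) hC₂base ζ f₀ hf₀
  rw [mid_self] at h2
  have h3 : f₀ ∈ derivIter (Dset (ε/4)) (Kw K) (ζ + ζ) :=
    derivIter_add (Dset_mono (ε/4)) (Dset_subset (ε/4)) ζ ζ h2
  -- Step 3: back to the tree, at level ε/8
  have h4 : ([] : List X) ∈ derivIter (derivD (weakBasis X)) (HKtree K (ε/4/2)) (ζ + ζ) :=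
    L1 (by linarith : (0:ℝ) < ε/4) (ζ + ζ) f₀ h3 [] (by simp) (by simp)
  have h5 : ([] : List X) ∈ derivIter (derivD (weakBasis X)) (HKtree K δ) (ζ + ζ) :=
    derivIter_mono (derivD_mono (weakBasis X))
      (HKtree_anti (by linarith : δ ≤ ε/4/2)) (ζ + ζ) h4
  have hmul : ζ * 2 = ζ + ζ := by
    rw [← Ordinal.succ_one, Ordinal.mul_succ, mul_one]
  rw [hmul]
  exact ⟨[], h5⟩
end
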